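/- For 1 < p < ∞, every strong Auerbach basis vector of l^n_p equals, up to a signed permutation of components, either (1, 0, ..., 0) or (2^{-1/p}, 2^{-1/p}, 0, ..., 0). (It suffices to treat p ≠ 2; for p = 2 interpret via orthogonality.) -/

import Mathlib

open Finset

/-- The `p`-norm on `ℝⁿ`. -/
noncomputable def pnorm (p : ℝ) {n : ℕ} (x : Fin n → ℝ) : ℝ :=
  (∑ j, |x j| ^ p) ^ (1 / p)

/-- `v` is an Auerbach basis of `l^n_p`. -/
def IsAuerbach (p : ℝ) {n : ℕ} (v : Fin n → Fin n → ℝ) : Prop :=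
  LinearIndependent ℝ v ∧ ∀ i, pnorm p (v i) = 1 ∧
    ∀ w ∈ Submodule.span ℝ (v '' {j | j ≠ i}), pnorm p (v i) ≤ pnorm p (v i + w)

/-- `v` is a strong Auerbach basis of `l^n_p`: an Auerbach basis such that the span of any
subset `S` of the basis vectors is isometrically isomorphic to `l^{|S|}_p`. -/
def IsStrongAuerbach (p : ℝ) {n : ℕ} (v : Fin n → Fin n → ℝ) : Prop :=
  IsAuerbach p v ∧ ∀ S : Finset (Fin n),
    ∃ g : (Fin S.card → ℝ) →ₗ[ℝ] (Fin n → ℝ),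
      (∀ c, pnorm p (g c) = pnorm p c) ∧
      LinearMap.range g = Submodule.span ℝ (v '' ↑S)

section Helpers

variable {p r : ℝ}

private lemma rpow_superadd (hr : 1 ≤ r) {s t : ℝ} (hs : 0 ≤ s) (ht : 0 ≤ t) :
    s ^ r + t ^ r ≤ (s + t) ^ r := by
  have hr0 : r ≠ 0 := by linarith
  rcases eq_or_lt_of_le hs with h | hs'
  · simp [← h, Real.zero_rpow hr0]
  rcases eq_or_lt_of_le ht with h | ht'
  · simp [← h, Real.zero_rpow hr0]
  have h1 : s ^ (r - 1) ≤ (s + t) ^ (r - 1) := by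
    apply Real.rpow_le_rpow hs (by linarith) (by linarith)
  have h2 : t ^ (r - 1) ≤ (s + t) ^ (r - 1) := by
    apply Real.rpow_le_rpow ht (by linarith) (by linarith)
  have es : s ^ r = s * s ^ (r - 1) := by
    rw [← Real.rpow_one_add' (le_of_lt hs') (by simpa using hr0)]; ring_nf
  have et : t ^ r = t * t ^ (r - 1) := by
    rw [← Real.rpow_one_add' (le_of_lt ht') (by simpa using hr0)]; ring_nf
  have est : (s + t) ^ r = (s + t) * (s + t) ^ (r - 1) := by
    rw [← Real.rpow_one_add' (by linarith) (by simpa using hr0)]; ring_nf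
  rw [es, et, est]
  have := mul_le_mul_of_nonneg_left h1 hs
  have := mul_le_mul_of_nonneg_left h2 ht
  nlinarith

private lemma rpow_subadd (hr0 : 0 < r) (hr : r ≤ 1) {s t : ℝ} (hs : 0 ≤ s) (ht : 0 ≤ t) :
    (s + t) ^ r ≤ s ^ r + t ^ r := by
  have hr0' : r ≠ 0 := ne_of_gt hr0
  rcases eq_or_lt_of_le hs with h | hs'
  · simp [← h, Real.zero_rpow hr0']
  rcases eq_or_lt_of_le ht with h | ht'
  · simp [← h, Real.zero_rpow hr0']
  have h1 : (s + t) ^ (r - 1) ≤ s ^ (r - 1) := by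
    apply Real.rpow_le_rpow_of_nonpos hs' (by linarith) (by linarith)
  have h2 : (s + t) ^ (r - 1) ≤ t ^ (r - 1) := by
    apply Real.rpow_le_rpow_of_nonpos ht' (by linarith) (by linarith)
  have es : s ^ r = s * s ^ (r - 1) := by
    rw [← Real.rpow_one_add' (le_of_lt hs') (by simpa using hr0')]; ring_nf
  have et : t ^ r = t * t ^ (r - 1) := by
    rw [← Real.rpow_one_add' (le_of_lt ht') (by simpa using hr0')]; ring_nf
  have est : (s + t) ^ r = (s + t) * (s + t) ^ (r - 1) := by
    rw [← Real.rpow_one_add' (by linarith) (by simpa using hr0')]; ring_nf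
  rw [es, et, est]
  have := mul_le_mul_of_nonneg_left h1 (le_of_lt hs')
  have := mul_le_mul_of_nonneg_left h2 (le_of_lt ht')
  nlinarith

private lemma jensen2_convex (hr : 1 < r) {s t : ℝ} (hs : 0 ≤ s) (ht : 0 ≤ t) (hst : s ≠ t) :
    2 * ((s + t) / 2) ^ r < s ^ r + t ^ r := by
  have := (strictConvexOn_rpow hr).2 (Set.mem_Ici.2 hs) (Set.mem_Ici.2 ht) hst
    (by norm_num : (0:ℝ) < 1/2) (by norm_num : (0:ℝ) < 1/2) (by norm_num)
  simp only [smul_eq_mul] at this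
  have e : (1:ℝ)/2 * s + 1/2 * t = (s + t)/2 := by ring
  rw [e] at this
  linarith

private lemma jensen2_concave (hr0 : 0 < r) (hr : r < 1) {s t : ℝ} (hs : 0 ≤ s) (ht : 0 ≤ t)
    (hst : s ≠ t) : s ^ r + t ^ r < 2 * ((s + t) / 2) ^ r := by
  have := (Real.strictConcaveOn_rpow hr0 hr).2 (Set.mem_Ici.2 hs) (Set.mem_Ici.2 ht) hst
    (by norm_num : (0:ℝ) < 1/2) (by norm_num : (0:ℝ) < 1/2) (by norm_num)
  simp only [smul_eq_mul] at this
  have e : (1:ℝ)/2 * s + 1/2 * t = (s + t)/2 := by ring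
  rw [e] at this
  linarith

/-- `|x|^p = (x^2)^(p/2)`. -/
private lemma abs_rpow_eq_sq_rpow (hp : 0 < p) (x : ℝ) : |x| ^ p = (x ^ 2) ^ (p / 2) := by
  rw [← sq_abs, ← Real.rpow_natCast |x| 2, ← Real.rpow_mul (abs_nonneg x)]
  push_cast
  rw [show (2:ℝ) * (p/2) = p by ring]

end Helpers

section H2
variable {p r : ℝ}

private lemma jensen2_convex' (hr : 1 < r) {s t : ℝ} (hs : 0 ≤ s) (ht : 0 ≤ t) :
    2 * ((s + t) / 2) ^ r ≤ s ^ r + t ^ r := by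
  rcases eq_or_ne s t with h | h
  · rw [h, show (t + t) / 2 = t by ring]; linarith
  · exact (jensen2_convex hr hs ht h).le

private lemma clarkson_ge (hp : 2 < p) (u w : ℝ) :
    2 * |u| ^ p + 2 * |w| ^ p ≤ |u + w| ^ p + |u - w| ^ p := by
  have hp0 : (0:ℝ) < p := by linarith
  have hr : 1 < p / 2 := by linarith
  rw [abs_rpow_eq_sq_rpow hp0 (u + w), abs_rpow_eq_sq_rpow hp0 (u - w),
    abs_rpow_eq_sq_rpow hp0 u, abs_rpow_eq_sq_rpow hp0 w]
  have key1 : 2 * (((u + w) ^ 2 + (u - w) ^ 2) / 2) ^ (p / 2)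
      ≤ ((u + w) ^ 2) ^ (p / 2) + ((u - w) ^ 2) ^ (p / 2) :=
    jensen2_convex' hr (sq_nonneg _) (sq_nonneg _)
  have key2 : (u ^ 2) ^ (p / 2) + (w ^ 2) ^ (p / 2) ≤ (u ^ 2 + w ^ 2) ^ (p / 2) :=
    rpow_superadd hr.le (sq_nonneg _) (sq_nonneg _)
  rw [show ((u + w) ^ 2 + (u - w) ^ 2) / 2 = u ^ 2 + w ^ 2 by ring] at key1
  linarith

private lemma clarkson_gt (hp : 2 < p) {u w : ℝ} (hu : u ≠ 0) (hw : w ≠ 0) :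
    2 * |u| ^ p + 2 * |w| ^ p < |u + w| ^ p + |u - w| ^ p := by
  have hp0 : (0:ℝ) < p := by linarith
  have hr : 1 < p / 2 := by linarith
  rw [abs_rpow_eq_sq_rpow hp0 (u + w), abs_rpow_eq_sq_rpow hp0 (u - w),
    abs_rpow_eq_sq_rpow hp0 u, abs_rpow_eq_sq_rpow hp0 w]
  have hst : (u + w) ^ 2 ≠ (u - w) ^ 2 := by
    intro h
    have : u * w = 0 := by nlinarith [h]
    rcases mul_eq_zero.1 this with h' | h' <;> [exact hu h'; exact hw h']
  have key1 : 2 * (((u + w) ^ 2 + (u - w) ^ 2) / 2) ^ (p / 2)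
      < ((u + w) ^ 2) ^ (p / 2) + ((u - w) ^ 2) ^ (p / 2) :=
    jensen2_convex hr (sq_nonneg _) (sq_nonneg _) hst
  have key2 : (u ^ 2) ^ (p / 2) + (w ^ 2) ^ (p / 2) ≤ (u ^ 2 + w ^ 2) ^ (p / 2) :=
    rpow_superadd hr.le (sq_nonneg _) (sq_nonneg _)
  rw [show ((u + w) ^ 2 + (u - w) ^ 2) / 2 = u ^ 2 + w ^ 2 by ring] at key1
  linarith

private lemma jensen2_concave' (hr0 : 0 < r) (hr : r < 1) {s t : ℝ} (hs : 0 ≤ s) (ht : 0 ≤ t) :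
    s ^ r + t ^ r ≤ 2 * ((s + t) / 2) ^ r := by
  rcases eq_or_ne s t with h | h
  · rw [h, show (t + t) / 2 = t by ring]; linarith
  · exact (jensen2_concave hr0 hr hs ht h).le

private lemma clarkson_le (hp0 : 0 < p) (hp : p < 2) (u w : ℝ) :
    |u + w| ^ p + |u - w| ^ p ≤ 2 * |u| ^ p + 2 * |w| ^ p := by
  have hr0 : 0 < p / 2 := by linarith
  have hr : p / 2 < 1 := by linarith
  rw [abs_rpow_eq_sq_rpow hp0 (u + w), abs_rpow_eq_sq_rpow hp0 (u - w),
    abs_rpow_eq_sq_rpow hp0 u, abs_rpow_eq_sq_rpow hp0 w]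
  have key1 : ((u + w) ^ 2) ^ (p / 2) + ((u - w) ^ 2) ^ (p / 2)
      ≤ 2 * (((u + w) ^ 2 + (u - w) ^ 2) / 2) ^ (p / 2) :=
    jensen2_concave' hr0 hr (sq_nonneg _) (sq_nonneg _)
  have key2 : (u ^ 2 + w ^ 2) ^ (p / 2) ≤ (u ^ 2) ^ (p / 2) + (w ^ 2) ^ (p / 2) :=
    rpow_subadd hr0 hr.le (sq_nonneg _) (sq_nonneg _)
  rw [show ((u + w) ^ 2 + (u - w) ^ 2) / 2 = u ^ 2 + w ^ 2 by ring] at key1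
  linarith

private lemma clarkson_lt (hp0 : 0 < p) (hp : p < 2) {u w : ℝ} (hu : u ≠ 0) (hw : w ≠ 0) :
    |u + w| ^ p + |u - w| ^ p < 2 * |u| ^ p + 2 * |w| ^ p := by
  have hr0 : 0 < p / 2 := by linarith
  have hr : p / 2 < 1 := by linarith
  rw [abs_rpow_eq_sq_rpow hp0 (u + w), abs_rpow_eq_sq_rpow hp0 (u - w),
    abs_rpow_eq_sq_rpow hp0 u, abs_rpow_eq_sq_rpow hp0 w]
  have hst : (u + w) ^ 2 ≠ (u - w) ^ 2 := by
    intro h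
    have : u * w = 0 := by nlinarith [h]
    rcases mul_eq_zero.1 this with h' | h' <;> [exact hu h'; exact hw h']
  have key1 : ((u + w) ^ 2) ^ (p / 2) + ((u - w) ^ 2) ^ (p / 2)
      < 2 * (((u + w) ^ 2 + (u - w) ^ 2) / 2) ^ (p / 2) :=
    jensen2_concave hr0 hr (sq_nonneg _) (sq_nonneg _) hst
  have key2 : (u ^ 2 + w ^ 2) ^ (p / 2) ≤ (u ^ 2) ^ (p / 2) + (w ^ 2) ^ (p / 2) :=
    rpow_subadd hr0 hr.le (sq_nonneg _) (sq_nonneg _)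
  rw [show ((u + w) ^ 2 + (u - w) ^ 2) / 2 = u ^ 2 + w ^ 2 by ring] at key1
  linarith

end H2

section H3
variable {p : ℝ}

private lemma myDerivAbsRpowZero (hp : 1 < p) :
    HasDerivAt (fun x : ℝ => |x| ^ p) 0 0 := by
  rw [hasDerivAt_iff_tendsto_slope]
  have hg : Filter.Tendsto (fun x : ℝ => |x| ^ (p - 1)) (nhdsWithin 0 {(0:ℝ)}ᶜ) (nhds 0) := by
    have hc : ContinuousAt (fun x : ℝ => |x| ^ (p - 1)) 0 := by
      exact (Real.continuousAt_rpow_const |(0:ℝ)| (p - 1) (Or.inr (by linarith))).comp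
        continuous_abs.continuousAt
    have h0 : |(0:ℝ)| ^ (p - 1) = 0 := by
      simp [Real.zero_rpow (by linarith : p - 1 ≠ 0)]
    have := hc.tendsto
    rw [h0] at this
    exact this.mono_left nhdsWithin_le_nhds
  apply squeeze_zero_norm' _ hg
  filter_upwards [self_mem_nhdsWithin] with x (hx : x ≠ 0)
  have hax : 0 < |x| := abs_pos.2 hx
  have h0 : |(0:ℝ)| ^ p = 0 := by simp [Real.zero_rpow (by linarith : p ≠ 0)]
  have : ‖slope (fun x : ℝ => |x| ^ p) 0 x‖ = |x| ^ p / |x| := by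
    rw [slope_def_field, h0, sub_zero, sub_zero, Real.norm_eq_abs, abs_div,
      abs_of_nonneg (Real.rpow_nonneg (abs_nonneg x) p)]
  have e : |x| ^ (p - 1) = |x| ^ p / |x| := by
    rw [Real.rpow_sub hax, Real.rpow_one]
  rw [this, e]

private lemma myDerivAbsRpow (hp : 1 < p) (c : ℝ) :
    HasDerivAt (fun x : ℝ => |x| ^ p) (p * |c| ^ (p - 1) * Real.sign c) c := by
  rcases lt_trichotomy c 0 with hc | hc | hc
  · have h1 : HasDerivAt (fun x : ℝ => -x) (-1) c := (hasDerivAt_id c).neg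
    have h2 := h1.rpow_const (p := p) (Or.inl (by simpa using ne_of_lt hc))
    have he : (fun x : ℝ => |x| ^ p) =ᶠ[nhds c] fun x => (-x) ^ p := by
      filter_upwards [Iio_mem_nhds hc] with x (hx : x < 0)
      rw [abs_of_neg hx]
    have h3 := h2.congr_of_eventuallyEq he
    rw [Real.sign_of_neg hc, abs_of_neg hc]
    rw [show p * (-c) ^ (p - 1) * -1 = -1 * p * (-c) ^ (p - 1) by ring]
    exact h3
  · subst hc
    have : p * |(0:ℝ)| ^ (p - 1) * Real.sign 0 = 0 := by simp [Real.sign_zero]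
    rw [this]
    exact myDerivAbsRpowZero hp
  · have h2 : HasDerivAt (fun x : ℝ => x ^ p) (p * c ^ (p - 1)) c :=
      Real.hasDerivAt_rpow_const (Or.inl (ne_of_gt hc))
    have he : (fun x : ℝ => |x| ^ p) =ᶠ[nhds c] fun x => x ^ p := by
      filter_upwards [Ioi_mem_nhds hc] with x (hx : 0 < x)
      rw [abs_of_pos hx]
    have := h2.congr_of_eventuallyEq he
    rw [Real.sign_of_pos hc, abs_of_pos hc, mul_one]
    exact this

private lemma orth2 (hp : 1 < p) {α β α' β' : ℝ}
    (hmin : ∀ t : ℝ, |α| ^ p + |β| ^ p ≤ |α + t * α'| ^ p + |β + t * β'| ^ p) :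
    |α| ^ (p - 1) * Real.sign α * α' + |β| ^ (p - 1) * Real.sign β * β' = 0 := by
  have hp0 : p ≠ 0 := by linarith
  have inner1 : HasDerivAt (fun t : ℝ => α + t * α') α' 0 := by
    simpa using ((hasDerivAt_id (0:ℝ)).mul_const α').const_add α
  have inner2 : HasDerivAt (fun t : ℝ => β + t * β') β' 0 := by
    simpa using ((hasDerivAt_id (0:ℝ)).mul_const β').const_add β
  have d1 : HasDerivAt (fun t : ℝ => |α + t * α'| ^ p)
      ((p * |α| ^ (p - 1) * Real.sign α) * α') 0 := by
    have := (myDerivAbsRpow hp (α + 0 * α')).comp 0 inner1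
    simpa [Function.comp_def] using this
  have d2 : HasDerivAt (fun t : ℝ => |β + t * β'| ^ p)
      ((p * |β| ^ (p - 1) * Real.sign β) * β') 0 := by
    have := (myDerivAbsRpow hp (β + 0 * β')).comp 0 inner2
    simpa [Function.comp_def] using this
  have hm : IsLocalMin (fun t : ℝ => |α + t * α'| ^ p + |β + t * β'| ^ p) 0 := by
    apply Filter.Eventually.of_forall
    intro t
    simpa using hmin t
  have h0 := hm.hasDerivAt_eq_zero (d1.add d2)
  have : p * (|α| ^ (p - 1) * Real.sign α * α' + |β| ^ (p - 1) * Real.sign β * β') = 0 := by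
    rw [← h0]; ring
  rcases mul_eq_zero.1 this with h | h
  · exact absurd h hp0
  · exact h

end H3

section H4
variable {p : ℝ}

private lemma abs_sign_eq_one {x : ℝ} (hx : x ≠ 0) : |Real.sign x| = 1 := by
  rcases lt_or_gt_of_ne hx with h | h
  · rw [Real.sign_of_neg h]; norm_num
  · rw [Real.sign_of_pos h]; norm_num

private lemma rsign_ne_zero {x : ℝ} (hx : x ≠ 0) : Real.sign x ≠ 0 := by
  intro h
  have := abs_sign_eq_one hx
  rw [h] at this
  norm_num at this

private lemma rpow_abs_pos {x : ℝ} (hx : x ≠ 0) (q : ℝ) : 0 < |x| ^ q :=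
  Real.rpow_pos_of_pos (abs_pos.2 hx) q

/-- Mutually Birkhoff-James-orthogonal unit vectors of `l^2_p`, `p ≠ 2`. -/
private lemma two_dim (hp : 1 < p) (hp2 : p ≠ 2) {α β α' β' : ℝ}
    (hu : |α| ^ p + |β| ^ p = 1) (hy : |α'| ^ p + |β'| ^ p = 1)
    (h1 : |α| ^ (p - 1) * Real.sign α * α' + |β| ^ (p - 1) * Real.sign β * β' = 0)
    (h2 : |α'| ^ (p - 1) * Real.sign α' * α + |β'| ^ (p - 1) * Real.sign β' * β = 0) :
    (α = 0 ∨ β = 0) ∨ (|α| = 2 ^ (-(1/p)) ∧ |β| = 2 ^ (-(1/p))) := by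
  have hp0 : p ≠ 0 := by linarith
  rcases eq_or_ne α 0 with hα | hα
  · exact Or.inl (Or.inl hα)
  rcases eq_or_ne β 0 with hβ | hβ
  · exact Or.inl (Or.inr hβ)
  -- both α', β' are nonzero
  have hα' : α' ≠ 0 := by
    intro h
    have hβ'0 : |β| ^ (p - 1) * Real.sign β * β' = 0 := by rw [h] at h1; simpa using h1
    have hβ' : β' = 0 := by
      rcases mul_eq_zero.1 hβ'0 with h' | h'
      · exact absurd h' (mul_ne_zero (ne_of_gt (rpow_abs_pos hβ _)) (rsign_ne_zero hβ))
      · exact h'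
    rw [h, hβ'] at hy
    simp [Real.zero_rpow hp0] at hy
  have hβ' : β' ≠ 0 := by
    intro h
    have hα'0 : |α| ^ (p - 1) * Real.sign α * α' = 0 := by rw [h] at h1; simpa using h1
    have : α' = 0 := by
      rcases mul_eq_zero.1 hα'0 with h' | h'
      · exact absurd h' (mul_ne_zero (ne_of_gt (rpow_abs_pos hα _)) (rsign_ne_zero hα))
      · exact h'
    exact hα' this
  -- absolute-value equations
  have E1 : |α| ^ (p - 1) * |α'| = |β| ^ (p - 1) * |β'| := by
    have : |α| ^ (p - 1) * Real.sign α * α' = -(|β| ^ (p - 1) * Real.sign β * β') := by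
      linarith
    have := congrArg abs this
    rwa [abs_neg, abs_mul, abs_mul, abs_mul, abs_mul, abs_sign_eq_one hα, abs_sign_eq_one hβ,
      abs_of_nonneg (le_of_lt (rpow_abs_pos hα _)), abs_of_nonneg (le_of_lt (rpow_abs_pos hβ _)),
      mul_one, mul_one] at this
  have E2 : |α'| ^ (p - 1) * |α| = |β'| ^ (p - 1) * |β| := by
    have : |α'| ^ (p - 1) * Real.sign α' * α = -(|β'| ^ (p - 1) * Real.sign β' * β) := by
      linarith
    have := congrArg abs this
    rwa [abs_neg, abs_mul, abs_mul, abs_mul, abs_mul, abs_sign_eq_one hα', abs_sign_eq_one hβ',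
      abs_of_nonneg (le_of_lt (rpow_abs_pos hα' _)), abs_of_nonneg (le_of_lt (rpow_abs_pos hβ' _)),
      mul_one, mul_one] at this
  -- pass to logarithms
  have hA : (0:ℝ) < |α| := abs_pos.2 hα
  have hB : (0:ℝ) < |β| := abs_pos.2 hβ
  have hA' : (0:ℝ) < |α'| := abs_pos.2 hα'
  have hB' : (0:ℝ) < |β'| := abs_pos.2 hβ'
  have L1 : (p - 1) * Real.log |α| + Real.log |α'| = (p - 1) * Real.log |β| + Real.log |β'| := by
    have := congrArg Real.log E1
    rwa [Real.log_mul (ne_of_gt (rpow_abs_pos hα _)) (ne_of_gt hA'),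
      Real.log_mul (ne_of_gt (rpow_abs_pos hβ _)) (ne_of_gt hB'),
      Real.log_rpow hA, Real.log_rpow hB] at this
  have L2 : (p - 1) * Real.log |α'| + Real.log |α| = (p - 1) * Real.log |β'| + Real.log |β| := by
    have := congrArg Real.log E2
    rwa [Real.log_mul (ne_of_gt (rpow_abs_pos hα' _)) (ne_of_gt hA),
      Real.log_mul (ne_of_gt (rpow_abs_pos hβ' _)) (ne_of_gt hB),
      Real.log_rpow hA', Real.log_rpow hB'] at this
  have hp2' : p - 2 ≠ 0 := fun h => hp2 (by linarith)
  have hsum : Real.log |α| + Real.log |α'| = Real.log |β| + Real.log |β'| := by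
    have hpne : p ≠ 0 := hp0
    have : p * (Real.log |α| + Real.log |α'|) = p * (Real.log |β| + Real.log |β'|) := by
      linarith
    exact mul_left_cancel₀ hpne this
  have hdiff : Real.log |α| - Real.log |α'| = Real.log |β| - Real.log |β'| := by
    have : (p - 2) * (Real.log |α| - Real.log |α'|)
        = (p - 2) * (Real.log |β| - Real.log |β'|) := by linarith
    exact mul_left_cancel₀ hp2' this
  have hlogAB : Real.log |α| = Real.log |β| := by linarith
  have hAB : |α| = |β| := by
    have := congrArg Real.exp hlogAB
    rwa [Real.exp_log hA, Real.exp_log hB] at this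
  have hApow : |α| ^ p = 1 / 2 := by
    rw [hAB] at hu ⊢
    linarith
  have hval : |α| = 2 ^ (-(1/p)) := by
    have h1' : (|α| ^ p) ^ (1/p) = |α| := by
      rw [← Real.rpow_mul (le_of_lt hA), mul_one_div_cancel hp0, Real.rpow_one]
    have h2' : ((1:ℝ)/2) ^ (1/p) = (2:ℝ) ^ (-(1/p)) := by
      rw [Real.rpow_neg (by norm_num : (0:ℝ) ≤ 2), ← Real.inv_rpow (by norm_num : (0:ℝ) ≤ 2)]
      norm_num
    rw [← h1', hApow, h2']
  exact Or.inr ⟨hval, hAB ▸ hval⟩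

end H4

section H5
variable {p : ℝ} {n m : ℕ}

private lemma sum_abs_rpow_nonneg (x : Fin n → ℝ) : (0:ℝ) ≤ ∑ j, |x j| ^ p :=
  Finset.sum_nonneg fun j _ => Real.rpow_nonneg (abs_nonneg _) p

private lemma pnorm_pow (hp0 : 0 < p) (x : Fin n → ℝ) : (pnorm p x) ^ p = ∑ j, |x j| ^ p := by
  rw [pnorm, ← Real.rpow_mul (sum_abs_rpow_nonneg x), one_div_mul_cancel (ne_of_gt hp0),
    Real.rpow_one]

private lemma sum_eq_of_pnorm_eq (hp0 : 0 < p) {x : Fin n → ℝ} {y : Fin m → ℝ}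
    (h : pnorm p x = pnorm p y) : ∑ j, |x j| ^ p = ∑ j, |y j| ^ p := by
  rw [← pnorm_pow hp0, ← pnorm_pow hp0, h]

private lemma sum_eq_one_of_pnorm_one (hp0 : 0 < p) {x : Fin n → ℝ} (h : pnorm p x = 1) :
    ∑ j, |x j| ^ p = 1 := by
  rw [← pnorm_pow hp0, h, Real.one_rpow]

private lemma one_le_sum_of_one_le_pnorm (hp0 : 0 < p) {x : Fin n → ℝ} (h : 1 ≤ pnorm p x) :
    1 ≤ ∑ j, |x j| ^ p := by
  have := Real.rpow_le_rpow (by norm_num) h (le_of_lt hp0)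
  rwa [Real.one_rpow, pnorm_pow hp0] at this

private lemma base_eq_rpow (hp0 : 0 < p) {c r : ℝ} (hc : 0 ≤ c) (h : c ^ p = r) :
    c = r ^ (1/p) := by
  rw [← h, ← Real.rpow_mul hc, mul_one_div_cancel (ne_of_gt hp0), Real.rpow_one]

private lemma half_rpow : ((1:ℝ)/2) ^ (1/p) = (2:ℝ) ^ (-(1/p)) := by
  rw [Real.rpow_neg (by norm_num : (0:ℝ) ≤ 2), ← Real.inv_rpow (by norm_num : (0:ℝ) ≤ 2)]
  norm_num

private lemma sum_single_one (hp0 : p ≠ 0) (j : Fin m) (aa : ℝ) :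
    ∑ l, |(Pi.single j aa : Fin m → ℝ) l| ^ p = |aa| ^ p := by
  classical
  rw [← Finset.sum_subset (Finset.subset_univ ({j} : Finset (Fin m)))]
  · rw [Finset.sum_singleton, Pi.single_eq_same]
  · intro l _ hl
    rw [Finset.mem_singleton] at hl
    rw [Pi.single_eq_of_ne hl, abs_zero, Real.zero_rpow hp0]

private lemma sum_single_pair (hp0 : p ≠ 0) {j k : Fin m} (hjk : j ≠ k) (aa bb : ℝ) :
    ∑ l, |(Pi.single j aa + Pi.single k bb : Fin m → ℝ) l| ^ p = |aa| ^ p + |bb| ^ p := by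
  classical
  rw [← Finset.sum_subset (Finset.subset_univ ({j, k} : Finset (Fin m)))]
  · rw [Finset.sum_pair hjk]
    have h1 : (Pi.single j aa + Pi.single k bb : Fin m → ℝ) j = aa := by
      simp [Pi.single_eq_of_ne, hjk.symm]
    have h2 : (Pi.single j aa + Pi.single k bb : Fin m → ℝ) k = bb := by
      simp [Pi.single_eq_of_ne, hjk]
    rw [h1, h2]
  · intro l _ hl
    simp only [Finset.mem_insert, Finset.mem_singleton, not_or] at hl
    have : (Pi.single j aa + Pi.single k bb : Fin m → ℝ) l = 0 := by
      simp [Pi.single_eq_of_ne hl.1, Pi.single_eq_of_ne hl.2]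
    rw [this, abs_zero, Real.zero_rpow hp0]

/-- Images of distinct basis vectors under an isometric embedding satisfy the `ℓ_p` identity. -/
private lemma pair_formula (hp0 : 0 < p) (g : (Fin m → ℝ) →ₗ[ℝ] (Fin n → ℝ))
    (hg : ∀ c, pnorm p (g c) = pnorm p c) {j k : Fin m} (hjk : j ≠ k) (aa bb : ℝ) :
    ∑ l, |aa * g (Pi.single j 1) l + bb * g (Pi.single k 1) l| ^ p = |aa| ^ p + |bb| ^ p := by
  have e : (fun l => aa * g (Pi.single j 1) l + bb * g (Pi.single k 1) l)
      = g (Pi.single j aa + Pi.single k bb) := by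
    funext l
    have e1 : (Pi.single j aa : Fin m → ℝ) = aa • (Pi.single j (1:ℝ) : Fin m → ℝ) := by
      funext t
      by_cases ht : t = j
      · subst ht; simp
      · simp [Pi.single_eq_of_ne ht]
    have e2 : (Pi.single k bb : Fin m → ℝ) = bb • (Pi.single k (1:ℝ) : Fin m → ℝ) := by
      funext t
      by_cases ht : t = k
      · subst ht; simp
      · simp [Pi.single_eq_of_ne ht]
    rw [e1, e2, map_add, map_smul, map_smul]
    simp
  have step1 : ∑ l, |aa * g (Pi.single j 1) l + bb * g (Pi.single k 1) l| ^ p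
      = ∑ l, |g (Pi.single j aa + Pi.single k bb) l| ^ p := by
    refine Finset.sum_congr rfl fun l _ => ?_
    rw [congrFun e l]
  have hpn := hg (Pi.single j aa + Pi.single k bb)
  have step2 : ∑ l, |g (Pi.single j aa + Pi.single k bb) l| ^ p
      = ∑ l, |(Pi.single j aa + Pi.single k bb : Fin m → ℝ) l| ^ p := by
    have h' := congrArg (fun z : ℝ => z ^ p) hpn
    simp only [pnorm_pow hp0] at h'
    exact h'
  rw [step1, step2]
  exact sum_single_pair (ne_of_gt hp0) hjk aa bb

/-- Two vectors spanning an isometric copy of `ℓ²_p` (`p ≠ 2`) are disjointly supported. -/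
private lemma disjoint_support (hp : 1 < p) (hp2 : p ≠ 2) {x y : Fin n → ℝ}
    (h : ∀ aa bb : ℝ, ∑ j, |aa * x j + bb * y j| ^ p = |aa| ^ p + |bb| ^ p) :
    ∀ j, x j * y j = 0 := by
  have hp0 : (0:ℝ) < p := by linarith
  have hp0' : p ≠ 0 := ne_of_gt hp0
  have h10 : ∑ j, |x j| ^ p = 1 := by
    have := h 1 0
    simpa [Real.zero_rpow hp0'] using this
  have h01 : ∑ j, |y j| ^ p = 1 := by
    have := h 0 1
    simpa [Real.zero_rpow hp0'] using this
  have h11 : ∑ j, |x j + y j| ^ p = 2 := by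
    have := h 1 1
    norm_num at this
    linarith [this]
  have h1m : ∑ j, |x j - y j| ^ p = 2 := by
    have := h 1 (-1)
    norm_num at this
    have e : ∀ j, x j + -y j = x j - y j := fun j => by ring
    simp only [e] at this
    linarith [this]
  intro j0
  by_contra hj0
  have hx0 : x j0 ≠ 0 := fun h' => hj0 (by rw [h', zero_mul])
  have hy0 : y j0 ≠ 0 := fun h' => hj0 (by rw [h', mul_zero])
  have e1 : ∑ j, (2 * |x j| ^ p + 2 * |y j| ^ p) = 4 := by
    rw [Finset.sum_add_distrib, ← Finset.mul_sum, ← Finset.mul_sum, h10, h01]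
    norm_num
  have e2 : ∑ j, (|x j + y j| ^ p + |x j - y j| ^ p) = 4 := by
    rw [Finset.sum_add_distrib, h11, h1m]
    norm_num
  rcases lt_or_gt_of_ne hp2 with hplt | hpgt
  · have hlt : ∑ j, (|x j + y j| ^ p + |x j - y j| ^ p)
        < ∑ j, (2 * |x j| ^ p + 2 * |y j| ^ p) := by
      apply Finset.sum_lt_sum
      · intro j _; exact clarkson_le hp0 hplt (x j) (y j)
      · exact ⟨j0, Finset.mem_univ j0, clarkson_lt hp0 hplt hx0 hy0⟩
    rw [e1, e2] at hlt
    exact lt_irrefl _ hlt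
  · have hlt : ∑ j, (2 * |x j| ^ p + 2 * |y j| ^ p)
        < ∑ j, (|x j + y j| ^ p + |x j - y j| ^ p) := by
      apply Finset.sum_lt_sum
      · intro j _; exact clarkson_ge hpgt (x j) (y j)
      · exact ⟨j0, Finset.mem_univ j0, clarkson_gt hpgt hx0 hy0⟩
    rw [e1, e2] at hlt
    exact lt_irrefl _ hlt

/-- Orthogonality to a vector supported at a single coordinate kills that coordinate. -/
private lemma kill_coord (hp : 1 < p) {u x : Fin n → ℝ} {j : Fin n}
    (hsum : ∑ l, |u l| ^ p = 1)
    (hmin : ∀ t : ℝ, (1:ℝ) ≤ ∑ l, |u l + t * x l| ^ p)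
    (hxj : x j ≠ 0) (hx : ∀ l, l ≠ j → x l = 0) : u j = 0 := by
  classical
  have hp0 : (0:ℝ) < p := by linarith
  set t0 := -(u j) / (x j) with ht0
  have hval : ∀ l, u l + t0 * x l = if l = j then 0 else u l := by
    intro l
    by_cases hl : l = j
    · subst hl
      rw [if_pos rfl, ht0, div_mul_cancel₀ _ hxj]
      ring
    · rw [if_neg hl, hx l hl, mul_zero, add_zero]
  have h2 : ∑ l, |u l + t0 * x l| ^ p = ∑ l ∈ Finset.univ.erase j, |u l| ^ p := by
    rw [← Finset.add_sum_erase _ _ (Finset.mem_univ j)]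
    rw [hval j, if_pos rfl, abs_zero, Real.zero_rpow (ne_of_gt hp0), zero_add]
    refine Finset.sum_congr rfl fun l hl => ?_
    rw [hval l, if_neg (Finset.ne_of_mem_erase hl)]
  have h1 : ∑ l, |u l| ^ p = |u j| ^ p + ∑ l ∈ Finset.univ.erase j, |u l| ^ p :=
    (Finset.add_sum_erase _ _ (Finset.mem_univ j)).symm
  have := hmin t0
  rw [h2] at this
  by_contra hu
  have : (0:ℝ) < |u j| ^ p := rpow_abs_pos hu p
  linarith

end H5

section H6
variable {p : ℝ} {n : ℕ}

private lemma eps_one (u : Fin n → ℝ) (j : Fin n) :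
    (if u j < 0 then (-1:ℝ) else 1) = 1 ∨ (if u j < 0 then (-1:ℝ) else 1) = -1 := by
  by_cases h : u j < 0 <;> simp [h]

private lemma signed_of_abs {c r : ℝ} (h : |c| = r) :
    c = (if c < 0 then (-1:ℝ) else 1) * r := by
  by_cases hc : c < 0
  · rw [if_pos hc, ← h, abs_of_neg hc]; ring
  · rw [if_neg hc, ← h, abs_of_nonneg (not_lt.1 hc), one_mul]

private lemma build_one (hn : 2 ≤ n) (hp : 1 < p) {u : Fin n → ℝ} {j0 : Fin n}
    (h1 : |u j0| = 1) (h0 : ∀ j, j ≠ j0 → u j = 0) :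
    ∃ (σ : Equiv.Perm (Fin n)) (ε : Fin n → ℝ), (∀ j, ε j = 1 ∨ ε j = -1) ∧
      ((∀ j, u j = ε j * (if (σ j : ℕ) = 0 then 1 else 0)) ∨
       (∀ j, u j = ε j * (if (σ j : ℕ) < 2 then (2 : ℝ) ^ (-(1 / p)) else 0))) := by
  have h0n : 0 < n := by omega
  set z0 : Fin n := ⟨0, h0n⟩
  refine ⟨Equiv.swap j0 z0, fun j => if u j < 0 then -1 else 1, fun j => eps_one u j, Or.inl ?_⟩
  intro j
  by_cases hj : j = j0
  · subst hj
    rw [Equiv.swap_apply_left]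
    simpa [z0] using signed_of_abs h1
  · have hval : (Equiv.swap j0 z0 j : ℕ) ≠ 0 := by
      intro hv
      have : Equiv.swap j0 z0 j = z0 := Fin.ext hv
      have h2 : Equiv.swap j0 z0 j = Equiv.swap j0 z0 j0 := by
        rw [this, Equiv.swap_apply_left]
      exact hj ((Equiv.swap j0 z0).injective h2)
    rw [if_neg hval, mul_zero]
    exact h0 j hj

private lemma build_two (hn : 2 ≤ n) (hp : 1 < p) {u : Fin n → ℝ} {a b : Fin n} (hab : a ≠ b)
    (ha : |u a| = (2:ℝ) ^ (-(1/p))) (hb : |u b| = (2:ℝ) ^ (-(1/p)))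
    (h0 : ∀ j, j ≠ a → j ≠ b → u j = 0) :
    ∃ (σ : Equiv.Perm (Fin n)) (ε : Fin n → ℝ), (∀ j, ε j = 1 ∨ ε j = -1) ∧
      ((∀ j, u j = ε j * (if (σ j : ℕ) = 0 then 1 else 0)) ∨
       (∀ j, u j = ε j * (if (σ j : ℕ) < 2 then (2 : ℝ) ^ (-(1 / p)) else 0))) := by
  have h0n : 0 < n := by omega
  have h1n : 1 < n := by omega
  set z0 : Fin n := ⟨0, h0n⟩
  set z1 : Fin n := ⟨1, h1n⟩
  have hz01 : z0 ≠ z1 := by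
    intro h
    have := congrArg Fin.val h
    simp [z0, z1] at this
  set τ : Equiv.Perm (Fin n) := Equiv.swap a z0 with hτ
  have hτb : τ b ≠ z0 := by
    intro h
    have : τ b = τ a := by rw [h, hτ, Equiv.swap_apply_left]
    exact hab.symm (τ.injective this)
  set σ : Equiv.Perm (Fin n) := τ.trans (Equiv.swap (τ b) z1) with hσ
  have hσa : σ a = z0 := by
    rw [hσ]
    simp only [Equiv.trans_apply, hτ, Equiv.swap_apply_left]
    rw [Equiv.swap_apply_of_ne_of_ne (Ne.symm hτb) hz01]
  have hσb : σ b = z1 := by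
    rw [hσ]
    simp only [Equiv.trans_apply]
    rw [Equiv.swap_apply_left]
  refine ⟨σ, fun j => if u j < 0 then -1 else 1, fun j => eps_one u j, Or.inr ?_⟩
  intro j
  by_cases hja : j = a
  · subst hja
    rw [hσa]
    rw [if_pos (by norm_num : ((z0 : ℕ)) < 2)]
    exact signed_of_abs ha
  by_cases hjb : j = b
  · subst hjb
    rw [hσb]
    rw [if_pos (by norm_num [z1] : ((z1 : ℕ)) < 2)]
    exact signed_of_abs hb
  · have hv0 : σ j ≠ z0 := fun h => hja (σ.injective (h.trans hσa.symm))
    have hv1 : σ j ≠ z1 := fun h => hjb (σ.injective (h.trans hσb.symm))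
    have : ¬ ((σ j : ℕ) < 2) := by
      have e0 : (σ j : ℕ) ≠ 0 := fun h => hv0 (Fin.ext h)
      have e1 : (σ j : ℕ) ≠ 1 := fun h => hv1 (Fin.ext h)
      omega
    rw [if_neg this, mul_zero]
    exact h0 j hja hjb

end H6

section H7
variable {p : ℝ} {n : ℕ}

private lemma sum_eq_single_val (hp0' : p ≠ 0) (x : Fin n → ℝ) (a : Fin n)
    (h : ∀ j, j ≠ a → x j = 0) : ∑ j, |x j| ^ p = |x a| ^ p := by
  classical
  rw [← Finset.sum_subset (Finset.subset_univ ({a} : Finset (Fin n)))]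
  · rw [Finset.sum_singleton]
  · intro l _ hl
    rw [Finset.mem_singleton] at hl
    rw [h l hl, abs_zero, Real.zero_rpow hp0']

/-- The key dichotomy coming from the pair `{i, k}`. -/
private lemma pair_step (hp : 1 < p) (hp2 : p ≠ 2)
    {v : Fin n → Fin n → ℝ} (hv : IsStrongAuerbach p v) {i k : Fin n} (hik : k ≠ i)
    {a b : Fin n} (hab : a ≠ b)
    (hva : v i a ≠ 0) (hvb : v i b ≠ 0) (hsupp : ∀ j, j ≠ a → j ≠ b → v i j = 0) :
    (v k a = 0 ∧ v k b = 0) ∨ (|v i a| = 2 ^ (-(1/p)) ∧ |v i b| = 2 ^ (-(1/p))) := by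
  classical
  have hp0 : (0:ℝ) < p := by linarith
  have hp0' : p ≠ 0 := ne_of_gt hp0
  have hunit : ∀ l, ∑ j, |v l j| ^ p = 1 := fun l =>
    sum_eq_one_of_pnorm_one hp0 (hv.1.2 l).1
  have horth : ∀ l, ∀ w ∈ Submodule.span ℝ (v '' {j | j ≠ l}),
      (1:ℝ) ≤ ∑ j, |v l j + w j| ^ p := by
    intro l w hw
    have h := (hv.1.2 l).2 w hw
    rw [(hv.1.2 l).1] at h
    have h2 := one_le_sum_of_one_le_pnorm hp0 h
    simpa using h2
  set S' : Finset (Fin n) := {i, k} with hS'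
  have hcard : S'.card = 2 := by
    rw [hS', Finset.card_insert_of_notMem (by simp [hik.symm]), Finset.card_singleton]
  obtain ⟨g, hg1, hg2⟩ := hv.2 S'
  set l1 : Fin S'.card := ⟨0, by omega⟩ with hl1
  set l2 : Fin S'.card := ⟨1, by omega⟩ with hl2
  have hl12 : l1 ≠ l2 := fun h => by simpa [hl1, hl2] using congrArg Fin.val h
  set x1 : Fin n → ℝ := g (Pi.single l1 1) with hx1
  set x2 : Fin n → ℝ := g (Pi.single l2 1) with hx2
  have hpair : ∀ aa bb : ℝ, ∑ j, |aa * x1 j + bb * x2 j| ^ p = |aa| ^ p + |bb| ^ p :=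
    fun aa bb => pair_formula hp0 g hg1 hl12 aa bb
  have hdisj : ∀ j, x1 j * x2 j = 0 := disjoint_support hp hp2 hpair
  have hx1unit : ∑ j, |x1 j| ^ p = 1 := by
    have := hpair 1 0
    simpa [Real.zero_rpow hp0'] using this
  have hx2unit : ∑ j, |x2 j| ^ p = 1 := by
    have := hpair 0 1
    simpa [Real.zero_rpow hp0'] using this
  have huniv : ({l1, l2} : Finset (Fin S'.card)) = Finset.univ := by
    apply Finset.eq_univ_of_card
    rw [Finset.card_insert_of_notMem (by simpa using hl12), Finset.card_singleton,
      Fintype.card_fin, hcard]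
  -- coordinates of v i and v k
  have hmemi : v i ∈ LinearMap.range g := by
    rw [hg2]
    exact Submodule.subset_span ⟨i, by simp [hS'], rfl⟩
  have hmemk : v k ∈ LinearMap.range g := by
    rw [hg2]
    exact Submodule.subset_span ⟨k, by simp [hS'], rfl⟩
  obtain ⟨c, hc⟩ := hmemi
  obtain ⟨c', hc'⟩ := hmemk
  have hcdec : ∀ cc : Fin S'.card → ℝ,
      cc = cc l1 • (Pi.single l1 (1:ℝ) : Fin S'.card → ℝ)
        + cc l2 • (Pi.single l2 (1:ℝ) : Fin S'.card → ℝ) := by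
    intro cc
    funext t
    have ht : t ∈ ({l1, l2} : Finset (Fin S'.card)) := huniv ▸ Finset.mem_univ t
    rw [Finset.mem_insert, Finset.mem_singleton] at ht
    rcases ht with h | h
    · subst h; simp [Pi.single_eq_of_ne hl12, Pi.single_eq_of_ne hl12.symm]
    · subst h; simp [Pi.single_eq_of_ne hl12, Pi.single_eq_of_ne hl12.symm]
  have hgdec : ∀ cc : Fin S'.card → ℝ, g cc = cc l1 • x1 + cc l2 • x2 := by
    intro cc
    conv_lhs => rw [hcdec cc]
    rw [map_add, map_smul, map_smul, hx1, hx2]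
  set α := c l1 with hα
  set β := c l2 with hβ
  set α' := c' l1 with hα'
  set β' := c' l2 with hβ'
  have hvi : ∀ j, v i j = α * x1 j + β * x2 j := by
    intro j
    rw [← hc, hgdec c]
    simp
    rfl
  have hvk : ∀ j, v k j = α' * x1 j + β' * x2 j := by
    intro j
    rw [← hc', hgdec c']
    simp
    rfl
  have hsumc : ∀ cc : Fin S'.card → ℝ, ∑ l, |cc l| ^ p = |cc l1| ^ p + |cc l2| ^ p := by
    intro cc
    rw [← huniv, Finset.sum_pair hl12]
  have hcunit : |α| ^ p + |β| ^ p = 1 := by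
    have hsc := sum_eq_of_pnorm_eq hp0 (hg1 c)
    rw [hc, hunit i, hsumc c] at hsc
    exact hsc.symm
  have hc'unit : |α'| ^ p + |β'| ^ p = 1 := by
    have hsc := sum_eq_of_pnorm_eq hp0 (hg1 c')
    rw [hc', hunit k, hsumc c'] at hsc
    exact hsc.symm
  -- mutual Birkhoff-James orthogonality in coordinates
  have hmin1 : ∀ t : ℝ, |α| ^ p + |β| ^ p ≤ |α + t * α'| ^ p + |β + t * β'| ^ p := by
    intro t
    have hw : (t • v k : Fin n → ℝ) ∈ Submodule.span ℝ (v '' {j | j ≠ i}) :=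
      Submodule.smul_mem _ t (Submodule.subset_span ⟨k, hik, rfl⟩)
    have h1 := horth i (t • v k) hw
    have hco : (fun j => v i j + (t • v k : Fin n → ℝ) j) = g (c + t • c') := by
      rw [map_add, map_smul, hc, hc']
      funext j
      simp
    have hs1 : ∑ j, |v i j + (t • v k : Fin n → ℝ) j| ^ p
        = ∑ l, |(c + t • c') l| ^ p := by
      calc ∑ j, |v i j + (t • v k : Fin n → ℝ) j| ^ p
          = ∑ j, |g (c + t • c') j| ^ p := by
            refine Finset.sum_congr rfl fun j _ => ?_
            rw [congrFun hco j]
        _ = ∑ l, |(c + t • c') l| ^ p := sum_eq_of_pnorm_eq hp0 (hg1 _)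
    rw [hs1, hsumc (c + t • c')] at h1
    simp only [Pi.add_apply, Pi.smul_apply, smul_eq_mul] at h1
    rw [hcunit]
    exact h1
  have hmin2 : ∀ t : ℝ, |α'| ^ p + |β'| ^ p ≤ |α' + t * α| ^ p + |β' + t * β| ^ p := by
    intro t
    have hw : (t • v i : Fin n → ℝ) ∈ Submodule.span ℝ (v '' {j | j ≠ k}) :=
      Submodule.smul_mem _ t (Submodule.subset_span ⟨i, hik.symm, rfl⟩)
    have h1 := horth k (t • v i) hw
    have hco : (fun j => v k j + (t • v i : Fin n → ℝ) j) = g (c' + t • c) := by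
      rw [map_add, map_smul, hc, hc']
      funext j
      simp
    have hs1 : ∑ j, |v k j + (t • v i : Fin n → ℝ) j| ^ p
        = ∑ l, |(c' + t • c) l| ^ p := by
      calc ∑ j, |v k j + (t • v i : Fin n → ℝ) j| ^ p
          = ∑ j, |g (c' + t • c) j| ^ p := by
            refine Finset.sum_congr rfl fun j _ => ?_
            rw [congrFun hco j]
        _ = ∑ l, |(c' + t • c) l| ^ p := sum_eq_of_pnorm_eq hp0 (hg1 _)
    rw [hs1, hsumc (c' + t • c)] at h1
    simp only [Pi.add_apply, Pi.smul_apply, smul_eq_mul] at h1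
    rw [hc'unit]
    exact h1
  have O1 := orth2 hp hmin1
  have O2 := orth2 hp hmin2
  rcases two_dim hp hp2 hcunit hc'unit O1 O2 with (hα0 | hβ0) | ⟨hA, hB⟩
  · -- α = 0 : v i = β • x2, v k = α' • x1
    have hβne : β ≠ 0 := by
      intro h
      rw [hα0, h] at hcunit
      simp [Real.zero_rpow hp0'] at hcunit
    have hβ'0 : β' = 0 := by
      have : |β| ^ (p - 1) * Real.sign β * β' = 0 := by
        rw [hα0] at O1
        simpa [Real.zero_rpow (by linarith : p - (1:ℝ) ≠ 0)] using O1
      rcases mul_eq_zero.1 this with h' | h'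
      · exact absurd h' (mul_ne_zero (ne_of_gt (rpow_abs_pos hβne _)) (rsign_ne_zero hβne))
      · exact h'
    have hx2a : x2 a ≠ 0 := by
      intro h
      apply hva
      rw [hvi a, hα0, h]
      ring
    have hx2b : x2 b ≠ 0 := by
      intro h
      apply hvb
      rw [hvi b, hα0, h]
      ring
    have hx1a : x1 a = 0 := by
      rcases mul_eq_zero.1 (hdisj a) with h' | h'
      · exact h'
      · exact absurd h' hx2a
    have hx1b : x1 b = 0 := by
      rcases mul_eq_zero.1 (hdisj b) with h' | h'
      · exact h'
      · exact absurd h' hx2b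
    left
    constructor
    · rw [hvk a, hx1a, hβ'0]; ring
    · rw [hvk b, hx1b, hβ'0]; ring
  · -- β = 0 : v i = α • x1, v k = β' • x2
    have hαne : α ≠ 0 := by
      intro h
      rw [hβ0, h] at hcunit
      simp [Real.zero_rpow hp0'] at hcunit
    have hα'0 : α' = 0 := by
      have : |α| ^ (p - 1) * Real.sign α * α' = 0 := by
        rw [hβ0] at O1
        simpa [Real.zero_rpow (by linarith : p - (1:ℝ) ≠ 0)] using O1
      rcases mul_eq_zero.1 this with h' | h'
      · exact absurd h' (mul_ne_zero (ne_of_gt (rpow_abs_pos hαne _)) (rsign_ne_zero hαne))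
      · exact h'
    have hx1a : x1 a ≠ 0 := by
      intro h
      apply hva
      rw [hvi a, hβ0, h]
      ring
    have hx1b : x1 b ≠ 0 := by
      intro h
      apply hvb
      rw [hvi b, hβ0, h]
      ring
    have hx2a : x2 a = 0 := by
      rcases mul_eq_zero.1 (hdisj a) with h' | h'
      · exact absurd h' hx1a
      · exact h'
    have hx2b : x2 b = 0 := by
      rcases mul_eq_zero.1 (hdisj b) with h' | h'
      · exact absurd h' hx1b
      · exact h'
    left
    constructor
    · rw [hvk a, hx2a, hα'0]; ring
    · rw [hvk b, hx2b, hα'0]; ring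
  · -- |α| = |β| = 2^(-1/p)
    right
    have hpos : (0:ℝ) < 2 ^ (-(1/p)) := Real.rpow_pos_of_pos (by norm_num) _
    have hαne : α ≠ 0 := by
      intro h
      rw [h, abs_zero] at hA
      exact (ne_of_gt hpos) hA.symm
    have hβne : β ≠ 0 := by
      intro h
      rw [h, abs_zero] at hB
      exact (ne_of_gt hpos) hB.symm
    have hout : ∀ j, j ≠ a → j ≠ b → x1 j = 0 ∧ x2 j = 0 := by
      intro j hja hjb
      have hz := hsupp j hja hjb
      rw [hvi j] at hz
      rcases mul_eq_zero.1 (hdisj j) with h' | h'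
      · refine ⟨h', ?_⟩
        rw [h', mul_zero, zero_add] at hz
        exact (mul_eq_zero.1 hz).resolve_left hβne
      · refine ⟨?_, h'⟩
        rw [h', mul_zero, add_zero] at hz
        exact (mul_eq_zero.1 hz).resolve_left hαne
    have habs : ∀ (y : Fin n → ℝ), (∑ j, |y j| ^ p = 1) → ∀ (j0 : Fin n),
        (∀ j, j ≠ j0 → y j = 0) → |y j0| = 1 := by
      intro y hy j0 h0
      have := sum_eq_single_val hp0' y j0 h0
      rw [hy] at this
      have := base_eq_rpow hp0 (abs_nonneg _) this.symm
      rwa [Real.one_rpow] at this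
    by_cases hcase : x1 a ≠ 0
    · have hx2a : x2 a = 0 := (mul_eq_zero.1 (hdisj a)).resolve_left hcase
      have hx2b : x2 b ≠ 0 := by
        intro h
        have : ∑ j, |x2 j| ^ p = |x2 a| ^ p := by
          apply sum_eq_single_val hp0' x2 a
          intro j hj
          by_cases hjb : j = b
          · subst hjb; exact h
          · exact (hout j hj hjb).2
        rw [hx2unit, hx2a] at this
        simp [Real.zero_rpow hp0'] at this
      have hx1b : x1 b = 0 := (mul_eq_zero.1 (hdisj b)).resolve_right hx2b
      have h1 : |x1 a| = 1 := by
        apply habs x1 hx1unit a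
        intro j hj
        by_cases hjb : j = b
        · subst hjb; exact hx1b
        · exact (hout j hj hjb).1
      have h2 : |x2 b| = 1 := by
        apply habs x2 hx2unit b
        intro j hj
        by_cases hja : j = a
        · subst hja; exact hx2a
        · exact (hout j hja hj).2
      constructor
      · rw [hvi a, hx2a, mul_zero, add_zero, abs_mul, h1, mul_one, hA]
      · rw [hvi b, hx1b, mul_zero, zero_add, abs_mul, h2, mul_one, hB]
    · push_neg at hcase
      have hx2a : x2 a ≠ 0 := by
        intro h
        apply hva
        rw [hvi a, hcase, h]
        ring
      have hx1b : x1 b ≠ 0 := by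
        intro h
        have : ∑ j, |x1 j| ^ p = |x1 a| ^ p := by
          apply sum_eq_single_val hp0' x1 a
          intro j hj
          by_cases hjb : j = b
          · subst hjb; exact h
          · exact (hout j hj hjb).1
        rw [hx1unit, hcase] at this
        simp [Real.zero_rpow hp0'] at this
      have hx2b : x2 b = 0 := (mul_eq_zero.1 (hdisj b)).resolve_left hx1b
      have h1 : |x2 a| = 1 := by
        apply habs x2 hx2unit a
        intro j hj
        by_cases hjb : j = b
        · subst hjb; exact hx2b
        · exact (hout j hj hjb).2
      have h2 : |x1 b| = 1 := by
        apply habs x1 hx1unit b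
        intro j hj
        by_cases hja : j = a
        · subst hja; exact hcase
        · exact (hout j hja hj).1
      constructor
      · rw [hvi a, hcase, mul_zero, zero_add, abs_mul, h1, mul_one, hB]
      · rw [hvi b, hx2b, mul_zero, add_zero, abs_mul, h2, mul_one, hA]

end H7

/-- For `1 < p < ∞`, `p ≠ 2`, every member of a strong Auerbach basis of `l^n_p` equals, up
to a signed permutation of the components, `(1, 0, ..., 0)` or
`(2^{-1/p}, 2^{-1/p}, 0, ..., 0)`. -/
theorem stmt19 {n : ℕ} (hn : 2 ≤ n) (p : ℝ) (hp : 1 < p) (hp2 : p ≠ 2)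
    (v : Fin n → Fin n → ℝ) (hv : IsStrongAuerbach p v) :
    ∀ i, ∃ (σ : Equiv.Perm (Fin n)) (ε : Fin n → ℝ), (∀ j, ε j = 1 ∨ ε j = -1) ∧
      ((∀ j, v i j = ε j * (if (σ j : ℕ) = 0 then 1 else 0)) ∨
       (∀ j, v i j = ε j * (if (σ j : ℕ) < 2 then (2 : ℝ) ^ (-(1 / p)) else 0))) := by
  classical
  have hp0 : (0:ℝ) < p := by linarith
  have hp0' : p ≠ 0 := ne_of_gt hp0
  intro i
  have hunit : ∀ l, ∑ j, |v l j| ^ p = 1 := fun l =>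
    sum_eq_one_of_pnorm_one hp0 (hv.1.2 l).1
  have horth : ∀ w ∈ Submodule.span ℝ (v '' {j | j ≠ i}),
      (1:ℝ) ≤ ∑ j, |v i j + w j| ^ p := by
    intro w hw
    have h := (hv.1.2 i).2 w hw
    rw [(hv.1.2 i).1] at h
    have h2 := one_le_sum_of_one_le_pnorm hp0 h
    simpa using h2
  have habs1 : ∀ j0, (∀ j, j ≠ j0 → v i j = 0) → |v i j0| = 1 := by
    intro j0 h0
    have hs := sum_eq_single_val hp0' (v i) j0 h0
    rw [hunit i] at hs
    have := base_eq_rpow hp0 (abs_nonneg _) hs.symm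
    rwa [Real.one_rpow] at this
  set S : Finset (Fin n) := Finset.univ.erase i with hS
  have hcard : S.card = n - 1 := by
    rw [hS, Finset.card_erase_of_mem (Finset.mem_univ i), Finset.card_univ, Fintype.card_fin]
  obtain ⟨g, hg1, hg2⟩ := hv.2 S
  set x : Fin S.card → Fin n → ℝ := fun l => g (Pi.single l 1) with hx
  have hxunit : ∀ l, ∑ j, |x l j| ^ p = 1 := by
    intro l
    have h1 := sum_eq_of_pnorm_eq hp0 (hg1 (Pi.single l 1))
    rw [sum_single_one hp0' l 1] at h1
    simpa using h1
  have hxdisj : ∀ l l', l ≠ l' → ∀ j, x l j * x l' j = 0 := fun l l' hll' =>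
    disjoint_support hp hp2 (fun aa bb => pair_formula hp0 g hg1 hll' aa bb)
  have hspanset : (↑S : Set (Fin n)) = {j | j ≠ i} := by
    ext j
    simp [hS]
  have hxspan : ∀ l, x l ∈ Submodule.span ℝ (v '' {j | j ≠ i}) := by
    intro l
    rw [← hspanset, ← hg2]
    exact ⟨Pi.single l 1, rfl⟩
  set supp : Fin S.card → Finset (Fin n) :=
    fun l => Finset.univ.filter (fun j => x l j ≠ 0) with hsuppdef
  have hmem_supp : ∀ l j, j ∈ supp l ↔ x l j ≠ 0 := by
    intro l j
    simp [hsuppdef]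
  have hne : ∀ l, (supp l).Nonempty := by
    intro l
    rcases Finset.eq_empty_or_nonempty (supp l) with h | h
    · exfalso
      have hz : ∀ j, x l j = 0 := by
        intro j
        by_contra hj
        have : j ∈ supp l := (hmem_supp l j).2 hj
        rw [h] at this
        simp at this
      have h1 := hxunit l
      rw [Finset.sum_eq_zero (fun j _ => by
        rw [hz j, abs_zero, Real.zero_rpow hp0'])] at h1
      norm_num at h1
    · exact h
  have hdisjf : ∀ l l', l ≠ l' → Disjoint (supp l) (supp l') := by
    intro l l' h
    rw [Finset.disjoint_left]
    intro j hjl hjl'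
    exact ((hmem_supp l j).1 hjl) (by
      rcases mul_eq_zero.1 (hxdisj l l' h j) with h' | h'
      · exact h'
      · exact absurd h' ((hmem_supp l' j).1 hjl'))
  have hkill : ∀ l j0, supp l = {j0} → v i j0 = 0 := by
    intro l j0 hsl
    have hxj : x l j0 ≠ 0 := by
      apply (hmem_supp l j0).1
      rw [hsl]
      exact Finset.mem_singleton_self j0
    have hxz : ∀ j, j ≠ j0 → x l j = 0 := by
      intro j hj
      by_contra hcon
      have : j ∈ supp l := (hmem_supp l j).2 hcon
      rw [hsl, Finset.mem_singleton] at this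
      exact hj this
    apply kill_coord hp (hunit i) ?_ hxj hxz
    intro t
    have hw : (t • x l : Fin n → ℝ) ∈ Submodule.span ℝ (v '' {j | j ≠ i}) :=
      Submodule.smul_mem _ t (hxspan l)
    have := horth (t • x l) hw
    simpa using this
  -- counting
  have hsum_card : ∑ l, (supp l).card ≤ n := by
    rw [← Finset.card_biUnion (fun l _ l' _ h => hdisjf l l' h)]
    calc (Finset.univ.biUnion supp).card ≤ (Finset.univ : Finset (Fin n)).card :=
          Finset.card_le_univ _
      _ = n := by rw [Finset.card_univ, Fintype.card_fin]
  have hone : ∀ l, 1 ≤ (supp l).card := fun l => Finset.Nonempty.card_pos (hne l)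
  have hfin : Fintype.card (Fin S.card) = n - 1 := by rw [Fintype.card_fin, hcard]
  by_cases hall : ∀ l, (supp l).card = 1
  · -- case A : all supports singletons
    have hUcard : (Finset.univ.biUnion supp).card = n - 1 := by
      rw [Finset.card_biUnion (fun l _ l' _ h => hdisjf l l' h)]
      rw [Finset.sum_congr rfl (fun l _ => hall l), Finset.sum_const, smul_eq_mul, mul_one,
        Finset.card_univ, hfin]
    have hUzero : ∀ j ∈ Finset.univ.biUnion supp, v i j = 0 := by
      intro j hj
      rw [Finset.mem_biUnion] at hj
      obtain ⟨l, _, hjl⟩ := hj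
      obtain ⟨j', hj'⟩ := Finset.card_eq_one.1 (hall l)
      have : j = j' := by
        rw [hj', Finset.mem_singleton] at hjl
        exact hjl
      rw [this]
      exact hkill l j' hj'
    obtain ⟨j0, hj0⟩ : ∃ j0, v i j0 ≠ 0 := by
      by_contra hcon
      push_neg at hcon
      have h1 := hunit i
      rw [Finset.sum_eq_zero (fun j _ => by
        rw [hcon j, abs_zero, Real.zero_rpow hp0'])] at h1
      norm_num at h1
    have hj0U : j0 ∉ Finset.univ.biUnion supp := fun h => hj0 (hUzero j0 h)
    have h0 : ∀ j, j ≠ j0 → v i j = 0 := by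
      intro j hj
      by_cases hjU : j ∈ Finset.univ.biUnion supp
      · exact hUzero j hjU
      · exfalso
        have hsub : ({j, j0} : Finset (Fin n)) ⊆ Finset.univ \ Finset.univ.biUnion supp := by
          intro t ht
          rw [Finset.mem_insert, Finset.mem_singleton] at ht
          rcases ht with h | h <;> subst h
          · exact Finset.mem_sdiff.2 ⟨Finset.mem_univ _, hjU⟩
          · exact Finset.mem_sdiff.2 ⟨Finset.mem_univ _, hj0U⟩
        have hcs : ({j, j0} : Finset (Fin n)).card = 2 := by
          rw [Finset.card_insert_of_notMem (by simpa using hj), Finset.card_singleton]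
        have hsd : (Finset.univ \ Finset.univ.biUnion supp).card = 1 := by
          rw [Finset.card_sdiff_of_subset (Finset.subset_univ _), Finset.card_univ, Fintype.card_fin,
            hUcard]
          omega
        have := Finset.card_le_card hsub
        omega
    exact build_one hn hp (habs1 j0 h0) h0
  · -- case B : one support has two elements
    push_neg at hall
    obtain ⟨l0, hl0⟩ := hall
    have h2le : 2 ≤ (supp l0).card := by
      have := hone l0
      omega
    have hsplit : (supp l0).card + ∑ l ∈ Finset.univ.erase l0, (supp l).card
        = ∑ l, (supp l).card := Finset.add_sum_erase _ (fun l => (supp l).card) (Finset.mem_univ l0)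
    have hrest : (Finset.univ.erase l0).card ≤ ∑ l ∈ Finset.univ.erase l0, (supp l).card := by
      have := Finset.card_nsmul_le_sum (Finset.univ.erase l0)
        (fun l => (supp l).card) 1 (fun l _ => hone l)
      simpa using this
    have hecard : (Finset.univ.erase l0).card = n - 2 := by
      rw [Finset.card_erase_of_mem (Finset.mem_univ l0), Finset.card_univ, hfin]
      omega
    have hl0card : (supp l0).card = 2 := by
      rw [hecard] at hrest
      omega
    obtain ⟨a, b, hab, hl0ab⟩ := Finset.card_eq_two.1 hl0card
    have hothers : ∀ l, l ≠ l0 → (supp l).card = 1 := by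
      intro l hl
      by_contra hcon
      have h2l : 2 ≤ (supp l).card := by
        have := hone l
        omega
      have hmem : l ∈ Finset.univ.erase l0 := Finset.mem_erase.2 ⟨hl, Finset.mem_univ l⟩
      have hsplit2 : (supp l).card + ∑ l' ∈ (Finset.univ.erase l0).erase l, (supp l').card
          = ∑ l' ∈ Finset.univ.erase l0, (supp l').card := Finset.add_sum_erase _ (fun l' => (supp l').card) hmem
      have hrest2 : ((Finset.univ.erase l0).erase l).card
          ≤ ∑ l' ∈ (Finset.univ.erase l0).erase l, (supp l').card := by
        have := Finset.card_nsmul_le_sum ((Finset.univ.erase l0).erase l)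
          (fun l' => (supp l').card) 1 (fun l' _ => hone l')
        simpa using this
      have he2 : ((Finset.univ.erase l0).erase l).card = n - 3 := by
        rw [Finset.card_erase_of_mem hmem, hecard]
        omega
      have hn3 : 3 ≤ n := by
        have h2 : 1 < Fintype.card (Fin S.card) :=
          Fintype.one_lt_card_iff_nontrivial.2 ⟨⟨l, l0, hl⟩⟩
        omega
      omega
    have hUcard : (Finset.univ.biUnion supp).card = n := by
      rw [Finset.card_biUnion (fun l _ l' _ h => hdisjf l l' h)]
      rw [← hsplit, hl0card,
        Finset.sum_congr rfl (fun l hl => hothers l (Finset.mem_erase.1 hl).1),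
        Finset.sum_const, smul_eq_mul, mul_one, hecard]
      omega
    have hUuniv : Finset.univ.biUnion supp = Finset.univ :=
      Finset.eq_univ_of_card _ (by rw [hUcard, Fintype.card_fin])
    have hTab : ∀ j, j ≠ a → j ≠ b → v i j = 0 := by
      intro j hja hjb
      have hjU : j ∈ Finset.univ.biUnion supp := by
        rw [hUuniv]
        exact Finset.mem_univ j
      rw [Finset.mem_biUnion] at hjU
      obtain ⟨l, _, hjl⟩ := hjU
      by_cases hl : l = l0
      · exfalso
        subst hl
        rw [hl0ab, Finset.mem_insert, Finset.mem_singleton] at hjl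
        rcases hjl with h | h
        · exact hja h
        · exact hjb h
      · obtain ⟨j', hj'⟩ := Finset.card_eq_one.1 (hothers l hl)
        have : j = j' := by
          rw [hj', Finset.mem_singleton] at hjl
          exact hjl
        rw [this]
        exact hkill l j' hj'
    by_cases hva : v i a = 0
    · have h0 : ∀ j, j ≠ b → v i j = 0 := by
        intro j hj
        by_cases hja : j = a
        · subst hja; exact hva
        · exact hTab j hja hj
      exact build_one hn hp (habs1 b h0) h0
    by_cases hvb : v i b = 0
    · have h0 : ∀ j, j ≠ a → v i j = 0 := by
        intro j hj
        by_cases hjb : j = b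
        · subst hjb; exact hvb
        · exact hTab j hj hjb
      exact build_one hn hp (habs1 a h0) h0
    · by_cases hgood : |v i a| = 2 ^ (-(1/p)) ∧ |v i b| = 2 ^ (-(1/p))
      · exact build_two hn hp hab hgood.1 hgood.2 hTab
      · exfalso
        have hallk : ∀ k, k ≠ i → v k a = 0 ∧ v k b = 0 := by
          intro k hk
          rcases pair_step hp hp2 hv hk hab hva hvb hTab with h | h
          · exact h
          · exact absurd h hgood
        have hWspan : Submodule.span ℝ (v '' {j | j ≠ i})
            ≤ LinearMap.ker (LinearMap.proj a : (Fin n → ℝ) →ₗ[ℝ] ℝ)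
              ⊓ LinearMap.ker (LinearMap.proj b : (Fin n → ℝ) →ₗ[ℝ] ℝ) := by
          rw [Submodule.span_le]
          rintro _ ⟨k, hk, rfl⟩
          have hk' : k ≠ i := hk
          refine Submodule.mem_inf.2 ⟨?_, ?_⟩
          · exact LinearMap.mem_ker.2 (hallk k hk').1
          · exact LinearMap.mem_ker.2 (hallk k hk').2
        have hxl0W := hWspan (hxspan l0)
        have hxa : x l0 a = 0 :=
          LinearMap.mem_ker.1 (Submodule.mem_inf.1 hxl0W).1
        have haS : a ∈ supp l0 := by
          rw [hl0ab]
          exact Finset.mem_insert_self a {b}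
        exact ((hmem_supp l0 a).1 haS) hxa
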